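/- Consider the optimization: maximize Σ_{i≥0} √(x_i) over nonnegative sequences (x_i) with Σ x_i ≤ 1 and, for every i, 2α·x_i ≥ Σ_{j=i}^{i+m−1} x_j (where m = log n > 2α > 2). Then the geometric sequence x_i = (1−p)p^i, where p ∈ (0,1) solves (1−p^m)/(1−p) = 2α, is a feasible solution achieving objective value (1+√p)/√(1−p), and no feasible sequence achieves a larger value. -/

import Mathlib

open Finset

/-- Tail decay: a nonneg finitely-supported sequence satisfying the window
constraint has geometrically decaying tails. -/
lemma stmt16_tail_decay (p : ℝ) (hp0 : 0 ≤ p) (m : ℕ) (hm : 2 ≤ m) (N : ℕ)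
    (x : ℕ → ℝ) (hx : ∀ i, 0 ≤ x i) (hN : ∀ j, N ≤ j → x j = 0)
    (hc : ∀ i, ∑ j ∈ Ico i (i + m), x j ≤ (∑ k ∈ range m, p ^ k) * x i) :
    ∀ i, (∑ j ∈ Ico (i + 1) N, x j) ≤ p * ∑ j ∈ Ico i N, x j := by
  set σ : ℝ := ∑ k ∈ range m, p ^ k with hσdef
  set T : ℕ → ℝ := fun i => ∑ j ∈ Ico i N, x j with hTdef
  have hT0 : ∀ i, 0 ≤ T i := fun i => Finset.sum_nonneg fun j _ => hx j
  have hTz : ∀ i, N ≤ i → T i = 0 := by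
    intro i hi
    simp only [hTdef]
    rw [Finset.Ico_eq_empty (by omega)]
    simp
  have hsplit : ∀ i, ∑ j ∈ Ico i (i + m), x j = T i - T (i + m) := by
    intro i
    rcases le_or_gt (i + m) N with h | h
    · have h2 := Finset.sum_Ico_consecutive x (Nat.le_add_right i m) h
      simp only [hTdef]
      linarith
    · have hTm : T (i + m) = 0 := hTz _ h.le
      rcases le_or_gt i N with h2 | h2
      · have h3 := Finset.sum_Ico_consecutive x h2 h.le
        have hz : ∑ j ∈ Ico N (i + m), x j = 0 :=
          Finset.sum_eq_zero fun j hj => hN j (Finset.mem_Ico.mp hj).1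
        simp only [hTdef] at *
        linarith
      · have hTi : T i = 0 := hTz _ h2.le
        have hz : ∑ j ∈ Ico i (i + m), x j = 0 :=
          Finset.sum_eq_zero fun j hj => hN j (by have := (Finset.mem_Ico.mp hj).1; omega)
        rw [hz, hTi, hTm]; ring
  -- identities for σ
  set τ : ℝ := ∑ k ∈ range (m - 1), p ^ k with hτdef
  have hm1 : m - 1 + 1 = m := by omega
  have hid1 : σ = τ + p ^ (m - 1) := by
    have h := Finset.sum_range_succ (fun k => p ^ k) (m - 1)
    rw [hm1] at h
    exact h
  have hid2 : σ = 1 + p * τ := by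
    have h := Finset.sum_range_succ' (fun k => p ^ k) (m - 1)
    rw [hm1] at h
    have h2 : ∑ k ∈ range (m - 1), p ^ (k + 1) = p * τ := by
      rw [hτdef, Finset.mul_sum]
      exact Finset.sum_congr rfl fun k _ => by ring
    rw [h2] at h
    rw [hσdef, h]; ring
  have hτ1 : (1 : ℝ) ≤ τ := by
    calc (1 : ℝ) = p ^ 0 := (pow_zero p).symm
      _ ≤ ∑ k ∈ range (m - 1), p ^ k :=
        Finset.single_le_sum (f := fun k => p ^ k)
          (fun k _ => pow_nonneg hp0 k) (Finset.mem_range.mpr (by omega))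
  have hτpos : (0 : ℝ) < τ := by linarith
  -- main downward induction
  have key : ∀ k, ∀ i, N ≤ i + k → T (i + 1) ≤ p * T i := by
    intro k
    induction k with
    | zero =>
      intro i hi
      rw [hTz (i + 1) (by omega)]
      exact mul_nonneg hp0 (hT0 i)
    | succ k ih =>
      intro i hi
      rcases le_or_gt N (i + k) with h | h
      · exact ih i h
      have hiN : i < N := by omega
      have hchain : ∀ t, T (i + 1 + t) ≤ p ^ t * T (i + 1) := by
        intro t
        induction t with
        | zero => simp
        | succ t iht =>
          have h1 : T (i + 1 + t + 1) ≤ p * T (i + 1 + t) := ih (i + 1 + t) (by omega)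
          have h2 : p * T (i + 1 + t) ≤ p * (p ^ t * T (i + 1)) :=
            mul_le_mul_of_nonneg_left iht hp0
          have h3 : i + 1 + (t + 1) = i + 1 + t + 1 := by omega
          rw [h3]
          calc T (i + 1 + t + 1) ≤ p * (p ^ t * T (i + 1)) := le_trans h1 h2
            _ = p ^ (t + 1) * T (i + 1) := by ring
      have h2 : T (i + m) ≤ p ^ (m - 1) * T (i + 1) := by
        have h := hchain (m - 1)
        have he : i + 1 + (m - 1) = i + m := by omega
        rwa [he] at h
      have hxi : x i = T i - T (i + 1) := by
        have h := Finset.sum_eq_sum_Ico_succ_bot hiN x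
        simp only [hTdef] at *
        linarith
      have h1 : T i - T (i + m) ≤ σ * (T i - T (i + 1)) := by
        have h := hc i
        rw [hsplit i, hxi] at h
        exact h
      have e1 : T i - T (i + m) ≤ (τ + p ^ (m - 1)) * (T i - T (i + 1)) := by
        rw [← hid1]; exact h1
      have e3 : τ + p ^ (m - 1) = 1 + p * τ := by linarith [hid1, hid2]
      have e4 : (τ + p ^ (m - 1)) * T i = (1 + p * τ) * T i := by rw [e3]
      have hfin : τ * T (i + 1) ≤ τ * (p * T i) := by nlinarith [e1, h2, e4]
      exact le_of_mul_le_mul_left hfin hτpos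
  exact fun i => key N i (by omega)

/-- Tail bound from the decay lemma. -/
lemma stmt16_tail_bound (p : ℝ) (hp0 : 0 ≤ p) (m : ℕ) (hm : 2 ≤ m) (N : ℕ)
    (x : ℕ → ℝ) (hx : ∀ i, 0 ≤ x i) (hN : ∀ j, N ≤ j → x j = 0)
    (h1 : ∑ j ∈ Ico 0 N, x j ≤ 1)
    (hc : ∀ i, ∑ j ∈ Ico i (i + m), x j ≤ (∑ k ∈ range m, p ^ k) * x i) :
    ∀ i, (∑ j ∈ Ico i N, x j) ≤ p ^ i := by
  have hd := stmt16_tail_decay p hp0 m hm N x hx hN hc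
  intro i
  induction i with
  | zero => simpa using h1
  | succ i ih =>
    calc ∑ j ∈ Ico (i + 1) N, x j ≤ p * ∑ j ∈ Ico i N, x j := hd i
      _ ≤ p * p ^ i := mul_le_mul_of_nonneg_left ih hp0
      _ = p ^ (i + 1) := by ring

set_option maxHeartbeats 2000000 in
theorem stmt16 (α : ℝ) (m : ℕ) (hα : 1 < α) (hm : 2*α < (m:ℝ))
    (p : ℝ) (hp : p ∈ Set.Ioo (0:ℝ) 1) (hpeq : (1 - p^m) / (1 - p) = 2*α) :
    -- the geometric sequence is feasible
    ((∀ i : ℕ, 0 ≤ (1 - p) * p^i) ∧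
      Summable (fun i : ℕ => (1 - p) * p^i) ∧
      (∑' i : ℕ, (1 - p) * p^i) ≤ 1 ∧
      (∀ i : ℕ, (∑ j ∈ Finset.Ico i (i + m), (1 - p) * p^j) ≤ 2*α*((1 - p) * p^i))) ∧
    -- it achieves objective value (1+√p)/√(1-p)
    (∑' i : ℕ, Real.sqrt ((1 - p) * p^i)) = (1 + Real.sqrt p) / Real.sqrt (1 - p) ∧
    -- and it is optimal
    (∀ x : ℕ → ℝ, (∀ i, 0 ≤ x i) → Summable x → (∑' i, x i) ≤ 1 →
      (∀ i : ℕ, (∑ j ∈ Finset.Ico i (i + m), x j) ≤ 2*α*(x i)) →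
      (∑' i, Real.sqrt (x i)) ≤ (1 + Real.sqrt p) / Real.sqrt (1 - p)) := by
  obtain ⟨hp0, hp1⟩ := hp
  have h1p : (0:ℝ) < 1 - p := by linarith
  have hm2 : 2 ≤ m := by
    have h : (2:ℝ) ≤ (m:ℝ) := by linarith
    exact_mod_cast h
  -- σ = 2α
  have hσ : (∑ k ∈ range m, p ^ k) = 2*α := by
    rw [geom_sum_eq (ne_of_lt hp1)]
    rw [← hpeq]
    have h1 : p - 1 ≠ 0 := by linarith
    have h2 : (1:ℝ) - p ≠ 0 := by linarith
    field_simp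
    ring
  set q : ℝ := Real.sqrt p with hqdef
  have hq0 : 0 < q := Real.sqrt_pos.mpr hp0
  have hqq : q ^ 2 = p := Real.sq_sqrt hp0.le
  have hq1 : q < 1 := by nlinarith
  have h1q : (0:ℝ) < 1 - q := by linarith
  have hsqrt1p : (0:ℝ) < Real.sqrt (1 - p) := Real.sqrt_pos.mpr h1p
  have hqp : ∀ i : ℕ, Real.sqrt (p ^ i) = q ^ i := by
    intro i
    induction i with
    | zero => simp
    | succ n ihn =>
      rw [pow_succ, pow_succ, Real.sqrt_mul (pow_nonneg hp0.le n), ihn]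
  -- the window sum identity for the geometric sequence
  have hico : ∀ i : ℕ, (∑ j ∈ Finset.Ico i (i + m), (1 - p) * p^j)
      = 2*α*((1 - p) * p^i) := by
    intro i
    rw [Finset.sum_Ico_eq_sum_range]
    have he : i + m - i = m := by omega
    rw [he]
    have : ∀ k ∈ range m, (1 - p) * p ^ (i + k) = ((1 - p) * p ^ i) * p ^ k := by
      intro k _
      rw [pow_add]; ring
    rw [Finset.sum_congr rfl this, ← Finset.mul_sum, hσ]
    ring
  refine ⟨⟨?_, ?_, ?_, ?_⟩, ?_, ?_⟩
  · intro i
    exact mul_nonneg h1p.le (pow_nonneg hp0.le i)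
  · exact (summable_geometric_of_lt_one hp0.le hp1).mul_left _
  · rw [tsum_mul_left, tsum_geometric_of_lt_one hp0.le hp1]
    rw [mul_inv_cancel₀ (by linarith : (1:ℝ) - p ≠ 0)]
  · intro i
    exact le_of_eq (hico i)
  · -- value
    have hsq : ∀ i : ℕ, Real.sqrt ((1 - p) * p ^ i) = Real.sqrt (1 - p) * q ^ i := by
      intro i
      rw [Real.sqrt_mul h1p.le, hqp i]
    calc (∑' i : ℕ, Real.sqrt ((1 - p) * p^i))
        = ∑' i : ℕ, Real.sqrt (1 - p) * q ^ i := by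
          exact tsum_congr hsq
      _ = Real.sqrt (1 - p) * (1 - q)⁻¹ := by
          rw [tsum_mul_left, tsum_geometric_of_lt_one hq0.le hq1]
      _ = (1 + q) / Real.sqrt (1 - p) := by
          rw [eq_div_iff (ne_of_gt hsqrt1p)]
          have hms : Real.sqrt (1 - p) * Real.sqrt (1 - p) = 1 - p :=
            Real.mul_self_sqrt h1p.le
          field_simp
          nlinarith [hms, hqq]
  · -- optimality
    intro x hx hxsum hxtot hxc
    -- constraint in σ form
    have hc : ∀ i, ∑ j ∈ Ico i (i + m), x j ≤ (∑ k ∈ range m, p ^ k) * x i := by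
      intro i
      rw [hσ]
      exact hxc i
    -- Step A: tail bound for truncations
    have hTle : ∀ N i, (∑ j ∈ Ico i N, x j) ≤ p ^ i := by
      intro N i
      set y : ℕ → ℝ := fun j => if j < N then x j else 0 with hy
      have hy0 : ∀ j, 0 ≤ y j := by
        intro j
        simp only [hy]
        split
        · exact hx j
        · exact le_refl 0
      have hyN : ∀ j, N ≤ j → y j = 0 := by
        intro j hj
        simp only [hy]
        rw [if_neg (by omega)]
      have hyx : ∀ j, y j ≤ x j := by
        intro j
        simp only [hy]
        split
        · exact le_refl _
        · exact hx j
      have hyc : ∀ i, ∑ j ∈ Ico i (i + m), y j ≤ (∑ k ∈ range m, p ^ k) * y i := by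
        intro i
        by_cases hiN : i < N
        · have h1 : ∑ j ∈ Ico i (i + m), y j ≤ ∑ j ∈ Ico i (i + m), x j :=
            Finset.sum_le_sum fun j _ => hyx j
        
          have h2 : y i = x i := by simp only [hy]; rw [if_pos hiN]
          rw [h2]
          exact h1.trans (hc i)
        · have h1 : ∑ j ∈ Ico i (i + m), y j = 0 :=
            Finset.sum_eq_zero fun j hj => hyN j (by have := (Finset.mem_Ico.mp hj).1; omega)
          have h2 : y i = 0 := hyN i (by omega)
          rw [h1, h2, mul_zero]
      have hy1 : ∑ j ∈ Ico 0 N, y j ≤ 1 := by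
        have he : ∑ j ∈ Ico 0 N, y j = ∑ j ∈ range N, x j := by
          rw [Finset.range_eq_Ico]
          refine Finset.sum_congr rfl fun j hj => ?_
          simp only [hy]
          rw [if_pos (Finset.mem_Ico.mp hj).2]
        rw [he]
        exact (Summable.sum_le_tsum (range N) (fun i _ => hx i) hxsum).trans hxtot
      have hb := stmt16_tail_bound p hp0.le m hm2 N y hy0 hyN hy1 hyc i
      have he : ∑ j ∈ Ico i N, y j = ∑ j ∈ Ico i N, x j := by
        refine Finset.sum_congr rfl fun j hj => ?_
        simp only [hy]
        rw [if_pos (Finset.mem_Ico.mp hj).2]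
      rw [he] at hb
      exact hb
    -- Step C: weighted sum bound
    have hC : ∀ N M, M ≤ N →
        (∑ i ∈ range M, x i * (q ^ i)⁻¹) + (q ^ M)⁻¹ * (∑ j ∈ Ico M N, x j)
          ≤ 1 + q - q ^ (M + 1) := by
      intro N M
      induction M with
      | zero =>
        intro _
        have h := hTle N 0
        simp only [range_zero, sum_empty, pow_zero, inv_one, one_mul, zero_add, pow_one]
        have : (∑ j ∈ Ico 0 N, x j) ≤ 1 := by simpa using h
        linarith
      | succ M ih =>
        intro hM1
        have hMN : M < N := by omega
        have hsp : ∑ j ∈ Ico M N, x j = x M + ∑ j ∈ Ico (M + 1) N, x j :=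
          Finset.sum_eq_sum_Ico_succ_bot hMN x
        have hT1 : (∑ j ∈ Ico (M + 1) N, x j) ≤ p ^ (M + 1) := hTle N (M + 1)
        have hT1' : 0 ≤ ∑ j ∈ Ico (M + 1) N, x j := Finset.sum_nonneg fun j _ => hx j
        have ih' := ih (by omega)
        rw [hsp] at ih'
        rw [Finset.sum_range_succ]
        set U := ∑ j ∈ Ico (M + 1) N, x j with hU
        clear_value U
        have hqM : (0:ℝ) < q ^ M := pow_pos hq0 M
        have hqM1 : (0:ℝ) < q ^ (M + 1) := pow_pos hq0 (M + 1)
        have hkey : (q ^ (M + 1))⁻¹ * U ≤ (q ^ M)⁻¹ * U + q ^ (M + 1) - q ^ (M + 2) := by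
          have e : (q ^ (M + 1))⁻¹ - (q ^ M)⁻¹ = (1 - q) * (q ^ (M + 1))⁻¹ := by
            rw [pow_succ]
            field_simp
          have hmono : ((1 - q) * (q ^ (M + 1))⁻¹) * U
              ≤ ((1 - q) * (q ^ (M + 1))⁻¹) * p ^ (M + 1) := by
            apply mul_le_mul_of_nonneg_left hT1
            positivity
          have hpq : p ^ (M + 1) = q ^ (M + 1) * q ^ (M + 1) := by
            rw [← hqq]; ring
          have hcomp : ((1 - q) * (q ^ (M + 1))⁻¹) * p ^ (M + 1)
              = q ^ (M + 1) - q ^ (M + 2) := by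
            rw [hpq]
            field_simp
            ring
          nlinarith [hmono, hcomp, e]
        rw [mul_add] at ih'
        have h22 : q ^ (M + 1 + 1) = q ^ (M + 2) := by norm_num
        rw [h22]
        nlinarith [ih', hkey]
    -- Step D: partial sums of sqrt bounded
    have hD : ∀ N, (∑ i ∈ range N, Real.sqrt (x i)) ≤ (1 + q) / Real.sqrt (1 - p) := by
      intro N
      have hCS := Finset.sum_mul_sq_le_sq_mul_sq (range N)
        (fun i => Real.sqrt (q ^ i)) (fun i => Real.sqrt (x i * (q ^ i)⁻¹))
      have hfg : ∀ i : ℕ, Real.sqrt (q ^ i) * Real.sqrt (x i * (q ^ i)⁻¹)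
          = Real.sqrt (x i) := by
        intro i
        rw [← Real.sqrt_mul (pow_nonneg hq0.le i)]
        congr 1
        have hne : q ^ i ≠ 0 := ne_of_gt (pow_pos hq0 i)
        field_simp
      have hf2 : ∀ i : ℕ, (Real.sqrt (q ^ i)) ^ 2 = q ^ i :=
        fun i => Real.sq_sqrt (pow_nonneg hq0.le i)
      have hg2 : ∀ i : ℕ, (Real.sqrt (x i * (q ^ i)⁻¹)) ^ 2 = x i * (q ^ i)⁻¹ :=
        fun i => Real.sq_sqrt (mul_nonneg (hx i) (by positivity))
      have e0 : (∑ i ∈ range N, Real.sqrt (x i))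
          = ∑ i ∈ range N, Real.sqrt (q ^ i) * Real.sqrt (x i * (q ^ i)⁻¹) :=
        Finset.sum_congr rfl fun i _ => (hfg i).symm
      have e1 : (∑ i ∈ range N, (Real.sqrt (q ^ i)) ^ 2) = ∑ i ∈ range N, q ^ i :=
        Finset.sum_congr rfl fun i _ => hf2 i
      have e2 : (∑ i ∈ range N, (Real.sqrt (x i * (q ^ i)⁻¹)) ^ 2)
          = ∑ i ∈ range N, x i * (q ^ i)⁻¹ :=
        Finset.sum_congr rfl fun i _ => hg2 i
      have hgeo : (∑ i ∈ range N, q ^ i) ≤ (1 - q)⁻¹ := by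
        calc (∑ i ∈ range N, q ^ i)
            ≤ ∑' i : ℕ, q ^ i := Summable.sum_le_tsum (range N)
              (fun i _ => pow_nonneg hq0.le i)
              (summable_geometric_of_lt_one hq0.le hq1)
          _ = (1 - q)⁻¹ := tsum_geometric_of_lt_one hq0.le hq1
      have hw : (∑ i ∈ range N, x i * (q ^ i)⁻¹) ≤ 1 + q := by
        have h := hC N N (le_refl N)
        rw [Finset.Ico_self, Finset.sum_empty, mul_zero, add_zero] at h
        have : (0:ℝ) ≤ q ^ (N + 1) := by positivity
        linarith
      have hgeonn : (0:ℝ) ≤ ∑ i ∈ range N, q ^ i :=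
        Finset.sum_nonneg fun i _ => pow_nonneg hq0.le i
      have hwnn : (0:ℝ) ≤ ∑ i ∈ range N, x i * (q ^ i)⁻¹ :=
        Finset.sum_nonneg fun i _ => mul_nonneg (hx i) (by positivity)
      have hprod : (∑ i ∈ range N, q ^ i) * (∑ i ∈ range N, x i * (q ^ i)⁻¹)
          ≤ (1 - q)⁻¹ * (1 + q) :=
        mul_le_mul hgeo hw hwnn (by positivity)
      have hsq : (∑ i ∈ range N, Real.sqrt (x i)) ^ 2 ≤ (1 - q)⁻¹ * (1 + q) := by
        rw [e0]
        refine hCS.trans ?_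
        rw [e1, e2]
        exact hprod
      have hnn : (0:ℝ) ≤ ∑ i ∈ range N, Real.sqrt (x i) :=
        Finset.sum_nonneg fun i _ => Real.sqrt_nonneg _
      have hle : (∑ i ∈ range N, Real.sqrt (x i)) ≤ Real.sqrt ((1 - q)⁻¹ * (1 + q)) :=
        (Real.le_sqrt hnn (by positivity)).mpr hsq
      have hb : ((1 + q) / Real.sqrt (1 - p)) ^ 2 = (1 - q)⁻¹ * (1 + q) := by
        rw [div_pow, Real.sq_sqrt h1p.le]
        have h1p' : (1:ℝ) - p = (1 - q) * (1 + q) := by nlinarith [hqq]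
        rw [h1p']
        field_simp
      have heq : Real.sqrt ((1 - q)⁻¹ * (1 + q)) = (1 + q) / Real.sqrt (1 - p) := by
        rw [← hb, Real.sqrt_sq (by positivity)]
      rw [heq] at hle
      exact hle
    -- Step E: conclude for the tsum
    refine tsum_le_of_sum_le' (by positivity) fun s => ?_
    obtain ⟨N, hN⟩ := s.exists_nat_subset_range
    calc (∑ i ∈ s, Real.sqrt (x i))
        ≤ ∑ i ∈ range N, Real.sqrt (x i) :=
          Finset.sum_le_sum_of_subset_of_nonneg hN fun i _ _ => Real.sqrt_nonneg _
      _ ≤ (1 + q) / Real.sqrt (1 - p) := hD N
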